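/- Let ε > 0, F < 0, γ < 0, λ₁ = 0, and suppose W(x) = 2F/(γ − (−γ)cosh y(x)) with y(x) = (2√(−F)/√(1+ε))artanh(x/√(1+ε)) satisfies W(±1) = ε, so that γ = 2F/(ε(1 + cosh y₁)) where y₁ := y(1). Then ∫_{-1}^1 W(x)/(1+ε−x²) dx = ε sinh(y₁)/√(−F). -/

import Mathlib

open Real Set MeasureTheory intervalIntegral

/-- The inverse hyperbolic tangent. -/
noncomputable def artanh' (x : ℝ) : ℝ := (1/2) * Real.log ((1 + x) / (1 - x))

lemma artanh'_neg (x : ℝ) : artanh' (-x) = - artanh' x := by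
  unfold artanh'
  have h : (1 - x) / (1 + x) = ((1 + x) / (1 - x))⁻¹ := (inv_div _ _).symm
  rw [show (1:ℝ) + -x = 1 - x by ring, show (1:ℝ) - -x = 1 + x by ring, h, Real.log_inv]
  ring

lemma cosh_half (t : ℝ) : Real.cosh t = 2 * Real.cosh (t / 2) ^ 2 - 1 := by
  conv_lhs => rw [show t = 2 * (t / 2) by ring]
  rw [Real.cosh_two_mul]
  linarith [Real.cosh_sq (t / 2)]

lemma sinh_half (t : ℝ) : Real.sinh t = 2 * Real.sinh (t / 2) * Real.cosh (t / 2) := by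
  conv_lhs => rw [show t = 2 * (t / 2) by ring]
  rw [Real.sinh_two_mul]

set_option maxHeartbeats 1000000 in
/-- In the case λ₁ = 0, with W(x) = 2F/(γ − (−γ)cosh y(x)) and
W(±1) = ε, i.e. γ = 2F/(ε(1 + cosh y₁)), one has
∫_{-1}^1 W(x)/(1+ε−x²) dx = ε sinh(y₁)/√(−F). -/
theorem stmt_12 (ε F γ lam₁ : ℝ) (hε : 0 < ε) (hF : F < 0) (hγneg : γ < 0)
    (hlam₁ : lam₁ = 0)
    (y W : ℝ → ℝ) (y₁ : ℝ)
    (hy : y = fun x => (2 * Real.sqrt (-F) / Real.sqrt (1 + ε)) *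
      artanh' (x / Real.sqrt (1 + ε)))
    (hy₁ : y₁ = y 1)
    (hW : W = fun x => 2 * F / (γ - (-γ) * Real.cosh (y x)))
    (hWbdry : W 1 = ε ∧ W (-1) = ε)
    (hγ : γ = 2 * F / (ε * (1 + Real.cosh y₁))) :
    (∫ x in (-1:ℝ)..1, W x / (1 + ε - x^2)) = ε * Real.sinh y₁ / Real.sqrt (-F) := by
  have hs0 : (0:ℝ) < 1 + ε := by linarith
  set s : ℝ := Real.sqrt (1 + ε) with hs
  have hspos : 0 < s := Real.sqrt_pos.2 hs0
  have hssq : s ^ 2 = 1 + ε := Real.sq_sqrt hs0.le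
  have hs1 : 1 < s := by nlinarith
  set r : ℝ := Real.sqrt (-F) with hr
  have hrpos : 0 < r := Real.sqrt_pos.2 (by linarith)
  set K : ℝ := ε * (1 + Real.cosh y₁) / (2 * r) with hK
  set g : ℝ → ℝ := fun x => K * (Real.sinh (y x / 2) / Real.cosh (y x / 2)) with hg
  -- derivative of y on [-1,1]
  have hyderiv : ∀ x ∈ Set.Icc (-1:ℝ) 1, HasDerivAt y (2 * r / (1 + ε - x ^ 2)) x := by
    intro x hx
    have hxabs : |x / s| < 1 := by
      rw [abs_div, abs_of_pos hspos, div_lt_one hspos]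
      exact lt_of_le_of_lt (abs_le.2 ⟨hx.1, hx.2⟩) hs1
    have ha : 0 < 1 + x / s := by have := (abs_lt.1 hxabs).1; linarith
    have hb : 0 < 1 - x / s := by have := (abs_lt.1 hxabs).2; linarith
    have hden : (0:ℝ) < 1 + ε - x ^ 2 := by
      have h1 : x ^ 2 ≤ 1 := by nlinarith [hx.1, hx.2]
      linarith
    have hden' : s ^ 2 - x ^ 2 ≠ 0 := by rw [hssq]; exact hden.ne'
    have h1 : HasDerivAt (fun t : ℝ => 1 + t / s) (1 / s) x := by
      simpa using ((hasDerivAt_id x).div_const s).const_add (1:ℝ)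
    have h2 : HasDerivAt (fun t : ℝ => 1 - t / s) (-(1 / s)) x := by
      simpa using ((hasDerivAt_id x).div_const s).const_sub (1:ℝ)
    have h3 := h1.div h2 hb.ne'
    have h4 := (h3.log (div_pos ha hb).ne').const_mul ((1:ℝ)/2)
    have h5 := h4.const_mul (2 * r / s)
    have h6 : HasDerivAt y ((2 * r / s) * ((1:ℝ)/2 *
        ((1 / s * (1 - x / s) - (1 + x / s) * -(1 / s)) / (1 - x / s) ^ 2 /
          ((1 + x / s) / (1 - x / s))))) x := by
      rw [hy]
      exact h5
    convert h6 using 1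
    have hsx : s - x ≠ 0 := by
      have : x < s := lt_of_le_of_lt hx.2 hs1
      linarith [this]
    have hsx' : s + x ≠ 0 := by
      have : -s < x := by linarith [hx.1]
      intro h; linarith
    rw [show (1:ℝ) + ε = s ^ 2 from hssq.symm]
    field_simp [hspos.ne', ha.ne', hb.ne', hden', hsx, hsx']
    ring
  have hIcc : Set.uIcc (-1:ℝ) 1 = Set.Icc (-1:ℝ) 1 := Set.uIcc_of_le (by norm_num)
  have hcosh_ne : ∀ t : ℝ, Real.cosh t ≠ 0 := fun t => (Real.cosh_pos t).ne'
  have hy1pos : 0 < 1 + Real.cosh y₁ := by nlinarith [Real.one_le_cosh y₁]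
  have hgderiv : ∀ x ∈ Set.Icc (-1:ℝ) 1, HasDerivAt g (W x / (1 + ε - x ^ 2)) x := by
    intro x hx
    have hden : (0:ℝ) < 1 + ε - x ^ 2 := by
      have h1 : x ^ 2 ≤ 1 := by nlinarith [hx.1, hx.2]
      linarith
    set d : ℝ := 2 * r / (1 + ε - x ^ 2) / 2 with hd
    have hu : HasDerivAt (fun t => y t / 2) d x := (hyderiv x hx).div_const 2
    have hsinh : HasDerivAt (fun t => Real.sinh (y t / 2)) (Real.cosh (y x / 2) * d) x :=
      by have := (Real.hasDerivAt_sinh (y x / 2)).comp x hu; exact this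
    have hcosh : HasDerivAt (fun t => Real.cosh (y t / 2)) (Real.sinh (y x / 2) * d) x :=
      by have := (Real.hasDerivAt_cosh (y x / 2)).comp x hu; exact this
    have h7 := (hsinh.div hcosh (hcosh_ne _)).const_mul K
    convert h7 using 1
    case e'_4 => rfl
    case e'_5 => rfl
    case e'_8 => rfl
    have hcsq := Real.cosh_sq (y x / 2)
    have hnum : Real.cosh (y x / 2) * d * Real.cosh (y x / 2) -
        Real.sinh (y x / 2) * (Real.sinh (y x / 2) * d) = d := by
      calc Real.cosh (y x / 2) * d * Real.cosh (y x / 2) -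
            Real.sinh (y x / 2) * (Real.sinh (y x / 2) * d)
          = d * (Real.cosh (y x / 2) ^ 2 - Real.sinh (y x / 2) ^ 2) := by ring
        _ = d := by rw [hcsq]; ring
    rw [hnum]
    have hc := hcosh_ne (y x / 2)
    have hdenW : γ - -γ * Real.cosh (y x) = γ * (2 * Real.cosh (y x / 2) ^ 2) := by
      rw [cosh_half (y x)]; ring
    have hWx : W x = ε * (1 + Real.cosh y₁) / (2 * Real.cosh (y x / 2) ^ 2) := by
      rw [hW]
      dsimp only
      rw [hdenW, hγ]
      field_simp [hF.ne, hε.ne', hy1pos.ne', hc]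
    rw [hWx, hK, hd]
    field_simp [hrpos.ne', hden.ne', hc]
  -- integrability
  have hycont : ContinuousOn y (Set.Icc (-1:ℝ) 1) := fun x hx =>
    (hyderiv x hx).continuousAt.continuousWithinAt
  have hWcont : ContinuousOn (fun x => W x / (1 + ε - x ^ 2)) (Set.Icc (-1:ℝ) 1) := by
    apply ContinuousOn.div
    · rw [hW]
      apply continuousOn_const.div
      · exact continuousOn_const.sub
          (continuousOn_const.mul (Real.continuous_cosh.comp_continuousOn hycont))
      · intro x hx
        have h1 := Real.one_le_cosh (y x)
        have h2 : (0:ℝ) ≤ (-γ) * (Real.cosh (y x) - 1) :=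
          mul_nonneg (by linarith) (by linarith)
        have : γ - -γ * Real.cosh (y x) < 0 := by nlinarith
        exact this.ne
    · exact (continuous_const.sub (continuous_pow 2)).continuousOn
    · intro x hx
      have h1 : x ^ 2 ≤ 1 := by nlinarith [hx.1, hx.2]
      have : (0:ℝ) < 1 + ε - x ^ 2 := by linarith
      exact this.ne'
  have hint : IntervalIntegrable (fun x => W x / (1 + ε - x ^ 2)) volume (-1) 1 := by
    apply ContinuousOn.intervalIntegrable
    rwa [hIcc]
  have hgoal : (∫ x in (-1:ℝ)..1, W x / (1 + ε - x ^ 2)) = g 1 - g (-1) :=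
    intervalIntegral.integral_eq_sub_of_hasDerivAt
      (fun x hx => hgderiv x (hIcc ▸ hx)) hint
  rw [hgoal]
  have hym1 : y (-1) = -y₁ := by
    rw [hy₁, hy]
    simp only
    rw [show (-1:ℝ) / s = -(1 / s) by ring, artanh'_neg]
    ring
  have hy1v : y 1 = y₁ := hy₁.symm
  rw [hg]
  simp only [hy1v, hym1]
  rw [show (-y₁ / 2) = -(y₁ / 2) by ring, Real.sinh_neg, Real.cosh_neg]
  have hc := hcosh_ne (y₁ / 2)
  rw [hK, sinh_half y₁, cosh_half y₁]
  field_simp [hrpos.ne', hc]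
  ring
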